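/- Let f : [a,b] → ℝ be càdlàg and g : [a,b] → ℝ be of bounded variation. Then the deterministic backward integral satisfies: ∫_{[a,b]} g(s) d⁺f(s) = g(b)f(b⁻) − ∫_{]a,b]} f(s⁻) dg(s). -/

import Mathlib

open MeasureTheory Filter Topology Set

set_option maxHeartbeats 1000000


lemma bw_meas_of_rc (F : ℝ → ℝ) (h : ∀ x, Tendsto F (𝓝[≥] x) (𝓝 (F x))) :
    Measurable F := by
  have key : ∀ x : ℝ, Tendsto (fun n : ℕ => F ((⌈x * ((n : ℝ) + 1)⌉ : ℤ) / ((n : ℝ) + 1)))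
      atTop (𝓝 (F x)) := by
    intro x
    apply (h x).comp
    apply tendsto_nhdsWithin_of_tendsto_nhds_of_eventually_within
    · have hup : Tendsto (fun n : ℕ => x + 1 / ((n : ℝ) + 1)) atTop (𝓝 x) := by
        simpa using tendsto_const_nhds.add (tendsto_one_div_add_atTop_nhds_zero_nat (𝕜 := ℝ))
      have hlo : ∀ n : ℕ, x ≤ ((⌈x * ((n : ℝ) + 1)⌉ : ℤ) : ℝ) / ((n : ℝ) + 1) := fun n => by
        rw [le_div_iff₀ (by positivity : (0:ℝ) < (n:ℝ)+1)]
        exact Int.le_ceil _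
      have hhi : ∀ n : ℕ, ((⌈x * ((n : ℝ) + 1)⌉ : ℤ) : ℝ) / ((n : ℝ) + 1) ≤ x + 1 / ((n:ℝ)+1) :=
        fun n => by
        rw [div_le_iff₀ (by positivity : (0:ℝ) < (n:ℝ)+1)]
        have h1 := Int.ceil_lt_add_one (x * ((n:ℝ) + 1))
        have h2 : (x + 1 / ((n:ℝ)+1)) * ((n:ℝ)+1) = x * ((n:ℝ)+1) + 1 := by field_simp
        linarith
      exact tendsto_of_tendsto_of_tendsto_of_le_of_le tendsto_const_nhds hup hlo hhi
    · filter_upwards with n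
      rw [mem_Ici, le_div_iff₀ (by positivity : (0:ℝ) < (n:ℝ)+1)]
      exact Int.le_ceil _
  apply measurable_of_tendsto_metrizable (f := fun (n : ℕ) x =>
    F ((⌈x * ((n : ℝ) + 1)⌉ : ℤ) / ((n : ℝ) + 1)))
  · intro n
    exact (measurable_of_countable (fun k : ℤ => F (k / ((n : ℝ) + 1)))).comp
      ((measurable_id.mul_const _).ceil)
  · exact tendsto_pi_nhds.2 key

lemma bw_bdd (a b : ℝ) (f fl : ℝ → ℝ)
    (hf_rc : ∀ x ∈ Set.Ico a b, Tendsto f (𝓝[≥] x) (𝓝 (f x)))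
    (hf_ll : ∀ x ∈ Set.Ioc a b, Tendsto f (𝓝[<] x) (𝓝 (fl x))) :
    ∃ M : ℝ, ∀ x ∈ Set.Icc a b, |f x| ≤ M := by
  have := isCompact_Icc (a := a) (b := b)
  refine this.induction_on (p := fun t => ∃ M : ℝ, ∀ x ∈ t, |f x| ≤ M)
    ⟨0, by simp⟩ (fun s t hst ⟨M, hM⟩ => ⟨M, fun x hx => hM x (hst hx)⟩)
    (fun s t ⟨M, hM⟩ ⟨M', hM'⟩ => ⟨max M M', fun x hx => hx.elim
      (fun h => (hM x h).trans (le_max_left _ _))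
      (fun h => (hM' x h).trans (le_max_right _ _))⟩) ?_
  intro x hx
  have hr : ∀ᶠ y in 𝓝[Icc a b ∩ Ici x] x, |f y| ≤ |f x| + 1 := by
    rcases lt_or_eq_of_le hx.2 with hxb | hxb
    · apply Eventually.filter_mono (nhdsWithin_mono x inter_subset_right)
      have := hf_rc x ⟨hx.1, hxb⟩
      filter_upwards [this (Metric.closedBall_mem_nhds (f x) one_pos)] with y hy
      have : |f y - f x| ≤ 1 := by simpa [Real.dist_eq] using hy
      have := abs_sub_abs_le_abs_sub (f y) (f x)
      linarith
    · have hsub : Icc a b ∩ Ici x ⊆ {x} := by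
        intro y hy
        have : y ≤ b := hy.1.2
        have : x ≤ y := hy.2
        simp only [mem_singleton_iff]
        linarith [hxb ▸ ‹y ≤ b›]
      apply Eventually.filter_mono (nhdsWithin_mono x hsub)
      rw [nhdsWithin_singleton]
      simp only [eventually_pure]
      linarith [abs_nonneg (f x)]
  have hl : ∀ᶠ y in 𝓝[Icc a b ∩ Iio x] x, |f y| ≤ |fl x| + 1 := by
    rcases lt_or_eq_of_le hx.1 with hax | hax
    · apply Eventually.filter_mono (nhdsWithin_mono x inter_subset_right)
      have := hf_ll x ⟨hax, hx.2⟩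
      filter_upwards [this (Metric.closedBall_mem_nhds (fl x) one_pos)] with y hy
      have : |f y - fl x| ≤ 1 := by simpa [Real.dist_eq] using hy
      have := abs_sub_abs_le_abs_sub (f y) (fl x)
      linarith
    · have hsub : Icc a b ∩ Iio x ⊆ (∅ : Set ℝ) := by
        intro y hy
        exact absurd hy.2 (not_lt.2 (hax ▸ hy.1.1))
      apply Eventually.filter_mono (nhdsWithin_mono x hsub)
      rw [nhdsWithin_empty]
      exact eventually_bot
  have hdecomp : 𝓝[Icc a b] x = 𝓝[Icc a b ∩ Iio x] x ⊔ 𝓝[Icc a b ∩ Ici x] x := by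
    rw [← nhdsWithin_union, ← inter_union_distrib_left, Iio_union_Ici, inter_univ]
  have : ∀ᶠ y in 𝓝[Icc a b] x, |f y| ≤ max (|f x| + 1) (|fl x| + 1) := by
    rw [hdecomp, eventually_sup]
    constructor
    · filter_upwards [hl] with y hy using hy.trans (le_max_right _ _)
    · filter_upwards [hr] with y hy using hy.trans (le_max_left _ _)
  exact ⟨_, this, _, fun y hy => hy⟩

set_option maxHeartbeats 1000000

lemma bw_intble (H : ℝ → ℝ) (c d C : ℝ) (hm : Measurable H)
    (hb : ∀ s, |H s| ≤ C) (h0 : ∀ s, s ∉ Set.Icc c d → H s = 0) :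
    Integrable H := by
  have hind : Integrable ((Icc c d).indicator (fun _ => C)) := by
    rw [integrable_indicator_iff measurableSet_Icc]
    exact integrableOn_const measure_Icc_lt_top.ne
  apply hind.mono' hm.aestronglyMeasurable
  filter_upwards with s
  by_cases hs : s ∈ Icc c d
  · simpa [indicator_of_mem hs] using hb s
  · simp [indicator_of_notMem hs, h0 s hs]

lemma bw_avg (F : ℝ → ℝ) (t L : ℝ)
    (hFi : ∀ c d : ℝ, IntegrableOn F (Set.Ioo c d))
    (h : Tendsto F (𝓝[<] t) (𝓝 L)) :
    Tendsto (fun ε => (∫ s in Set.Ioo (t - ε) t, F s) / ε) (𝓝[>] (0:ℝ)) (𝓝 L) := by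
  rw [Metric.tendsto_nhdsWithin_nhds]
  intro η hη
  rw [Metric.tendsto_nhdsWithin_nhds] at h
  obtain ⟨δ, hδ, hδ'⟩ := h (η / 2) (by linarith)
  refine ⟨δ, hδ, ?_⟩
  intro ε hε hεδ
  have hε0 : 0 < ε := hε
  have hεδ' : ε < δ := by
    rw [Real.dist_eq, sub_zero, abs_of_pos hε0] at hεδ; exact hεδ
  have hvol : volume (Ioo (t - ε) t) = ENNReal.ofReal ε := by
    rw [Real.volume_Ioo]; congr 1; ring
  have hvlt : volume (Ioo (t - ε) t) < ⊤ := by rw [hvol]; exact ENNReal.ofReal_lt_top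
  have hconst : IntegrableOn (fun _ : ℝ => L) (Ioo (t - ε) t) :=
    integrableOn_const hvlt.ne
  have hbound : ∀ s ∈ Ioo (t - ε) t, ‖F s - L‖ ≤ η / 2 := by
    intro s hs
    have h2 : dist s t < δ := by
      rw [Real.dist_eq, abs_of_neg (by linarith [hs.2] : s - t < 0)]
      have := hs.1; linarith
    exact le_of_lt (hδ' hs.2 h2)
  have hint : ∫ s in Ioo (t - ε) t, F s = (∫ s in Ioo (t - ε) t, (F s - L)) + ε * L := by
    rw [integral_sub (hFi _ _) hconst, setIntegral_const, measureReal_def, hvol,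
      ENNReal.toReal_ofReal hε0.le, smul_eq_mul]
    ring
  have hnorm : ‖∫ s in Ioo (t - ε) t, (F s - L)‖ ≤ η / 2 * ε := by
    have h3 := norm_setIntegral_le_of_norm_le_const hvlt hbound
    rwa [measureReal_def, hvol, ENNReal.toReal_ofReal hε0.le] at h3
  rw [Real.dist_eq, hint]
  rw [add_div, mul_comm, mul_div_assoc, div_self hε0.ne', mul_one]
  have hfin : |(∫ s in Ioo (t - ε) t, (F s - L)) / ε| ≤ η / 2 := by
    rw [abs_div, abs_of_pos hε0, div_le_iff₀ hε0]
    simpa [Real.norm_eq_abs] using hnorm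
  calc |(∫ s in Ioo (t - ε) t, (F s - L)) / ε + L - L|
      = |(∫ s in Ioo (t - ε) t, (F s - L)) / ε| := by rw [add_sub_cancel_right]
    _ ≤ η / 2 := hfin
    _ < η := by linarith

lemma bw_nu_Ioc (g : StieltjesFunction ℝ) (a b c d : ℝ) (hab : a ≤ b) (hcd : c ≤ d) :
    ((g.measure.restrict (Set.Ioc a b)) (Set.Ioc c d)).toReal
      = g (a ⊔ (d ⊓ b)) - g (a ⊔ (c ⊓ b)) := by
  rw [Measure.restrict_apply measurableSet_Ioc, Ioc_inter_Ioc, g.measure_Ioc]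
  rcases le_or_gt (c ⊔ a) (d ⊓ b) with h | h
  · rw [ENNReal.toReal_ofReal (by linarith [g.mono h] : (0:ℝ) ≤ g (d ⊓ b) - g (c ⊔ a))]
    have h1 : a ⊔ (d ⊓ b) = d ⊓ b := sup_eq_right.2 (le_trans (le_sup_right) h)
    have h2 : c ⊓ b = c := inf_eq_left.2 (le_trans (le_sup_left) (h.trans inf_le_right))
    have h3 : a ⊔ (c ⊓ b) = c ⊔ a := by rw [h2, sup_comm]
    rw [h1, h3]
  · have hle : g (d ⊓ b) - g (c ⊔ a) ≤ 0 := by linarith [g.mono h.le]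
    rw [ENNReal.ofReal_of_nonpos hle, ENNReal.toReal_zero]
    -- empty case: either d < a or c > b
    rcases le_or_gt a c with hac | hac
    · -- c ⊔ a = c, so c > d ⊓ b; with c ≤ d we get c > b
      have hc : c ⊔ a = c := sup_eq_left.2 hac
      rw [hc] at h
      have hcb : b < c := by
        rcases le_or_gt d b with hdb | hdb
        · rw [inf_eq_left.2 hdb] at h; linarith
        · rw [inf_eq_right.2 hdb.le] at h; exact h
      have h1 : d ⊓ b = b := inf_eq_right.2 (by linarith)
      have h2 : c ⊓ b = b := inf_eq_right.2 (by linarith)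
      rw [h1, h2]; ring
    · -- a > c
      rcases le_or_gt a d with had | had
      · have hca : c ⊔ a = a := sup_eq_right.2 hac.le
        rw [hca] at h
        exact absurd (le_inf had hab) (not_le.2 h)
      · -- d < a
        have h1 : a ⊔ (d ⊓ b) = a := sup_eq_left.2 ((inf_le_left).trans had.le)
        have h2 : a ⊔ (c ⊓ b) = a := sup_eq_left.2 ((inf_le_left).trans (hcd.trans had.le))
        rw [h1, h2]; ring

set_option maxHeartbeats 1000000

lemma bw_fubini (a b : ℝ) (F : ℝ → ℝ) (M : ℝ) (hFm : Measurable F) (hFb : ∀ s, |F s| ≤ M)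
    (ν : Measure ℝ) [IsFiniteMeasure ν] (hν : ν (Set.Ioc a b)ᶜ = 0) (ε : ℝ) (hε : 0 < ε) :
    (∫ s, F s * (ν (Set.Ioc s (s + ε))).toReal) = (∫ t, (∫ s in Set.Ioo (t - ε) t, F s) ∂ν)
      ∧ Integrable (fun t => ∫ s in Set.Ioo (t - ε) t, F s) ν := by
  have hM0 : 0 ≤ M := (abs_nonneg _).trans (hFb 0)
  set H : ℝ × ℝ → ℝ := fun p => (Set.Ioc p.1 (p.1 + ε)).indicator (fun _ => F p.1) p.2 with hH
  have hE : MeasurableSet {p : ℝ × ℝ | p.1 < p.2 ∧ p.2 ≤ p.1 + ε} := by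
    apply (measurableSet_lt measurable_fst measurable_snd).inter
    exact measurableSet_le measurable_snd (measurable_fst.add_const ε)
  have hHeq : H = Set.indicator {p : ℝ × ℝ | p.1 < p.2 ∧ p.2 ≤ p.1 + ε} (fun p => F p.1) := by
    funext p
    simp only [hH, Set.indicator_apply, Set.mem_Ioc, Set.mem_setOf_eq]
  have hHm : Measurable H := by
    rw [hHeq]; exact (hFm.comp measurable_fst).indicator hE
  have hHint : Integrable H (volume.prod ν) := by
    refine Integrable.mono'
      (g := fun p : ℝ × ℝ => (Set.Ioo (a - ε) b ×ˢ (Set.univ : Set ℝ)).indicator (fun _ => M) p)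
      ?_ hHm.aestronglyMeasurable ?_
    · rw [integrable_indicator_iff (measurableSet_Ioo.prod MeasurableSet.univ)]
      refine integrableOn_const (ne_of_lt ?_)
      rw [Measure.prod_prod]
      exact ENNReal.mul_lt_top (by simp [Real.volume_Ioo]) (measure_lt_top ν _)
    · have hae : ∀ᵐ p ∂((volume : Measure ℝ).prod ν), p.2 ∈ Set.Ioc a b := by
        rw [ae_iff]
        have hsub : {p : ℝ × ℝ | ¬ p.2 ∈ Set.Ioc a b} = (Set.univ : Set ℝ) ×ˢ (Set.Ioc a b)ᶜ := by
          ext p; simp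
        rw [hsub, Measure.prod_prod, hν, mul_zero]
      filter_upwards [hae] with p hp
      by_cases hmem : p.2 ∈ Set.Ioc p.1 (p.1 + ε)
      · have h1 : p.1 ∈ Set.Ioo (a - ε) b := ⟨by linarith [hmem.2, hp.1], lt_of_lt_of_le hmem.1 hp.2⟩
        rw [hH]
        simp only [Set.indicator_of_mem hmem]
        rw [Set.indicator_of_mem (by exact ⟨h1, Set.mem_univ _⟩)]
        exact (hFb p.1)
      · rw [hH]; simp only [Set.indicator_of_notMem hmem, norm_zero]
        exact Set.indicator_apply_nonneg (fun _ => hM0)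
  have hswap : ∫ s, (∫ t, H (s, t) ∂ν) = ∫ t, (∫ s, H (s, t)) ∂ν :=
    integral_integral_swap (f := fun s t => H (s, t)) hHint
  have hinner1 : ∀ s : ℝ, (∫ t, H (s, t) ∂ν) = F s * (ν (Set.Ioc s (s + ε))).toReal := by
    intro s
    rw [hH]
    simp only []
    rw [integral_indicator_const (F s) measurableSet_Ioc, smul_eq_mul, mul_comm, measureReal_def]
  have hinner2 : ∀ t : ℝ, (∫ s, H (s, t)) = ∫ s in Set.Ioo (t - ε) t, F s := by
    intro t
    have heq : (fun s => H (s, t)) = (Set.Ico (t - ε) t).indicator F := by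
      funext s
      simp only [hH, Set.indicator_apply, Set.mem_Ioc, Set.mem_Ico]
      rw [if_congr (show (s < t ∧ t ≤ s + ε) ↔ (t - ε ≤ s ∧ s < t) from
        ⟨fun h => ⟨by linarith [h.2], h.1⟩, fun h => ⟨h.2, by linarith [h.1]⟩⟩) rfl rfl]
    rw [heq, integral_indicator measurableSet_Ico, integral_Ico_eq_integral_Ioo]
  constructor
  · calc (∫ s, F s * (ν (Set.Ioc s (s + ε))).toReal)
        = ∫ s, (∫ t, H (s, t) ∂ν) := by simp_rw [hinner1]
      _ = ∫ t, (∫ s, H (s, t)) ∂ν := hswap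
      _ = ∫ t, (∫ s in Set.Ioo (t - ε) t, F s) ∂ν := by simp_rw [hinner2]
  · have h1 : Integrable (fun t => ∫ s, H (s, t)) ν := hHint.integral_prod_right
    exact h1.congr (Filter.Eventually.of_forall fun t => hinner2 t)

set_option maxHeartbeats 2000000 in
/-- Integration by parts for the backward integral: if `f` is càdlàg on `[a,b]` (with left
limits `fl`) and `g` is of bounded variation (difference of Stieltjes functions on `[a,b]`),
then the backward integral `∫_{[a,b]} g d⁺f` exists and equals
`g(b)f(b⁻) − ∫_{]a,b]} f(s⁻) dg(s)`. -/
theorem stmt3 (a b : ℝ) (hab : a < b) (f fl g : ℝ → ℝ)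
    (g₁ g₂ : StieltjesFunction ℝ)
    (hg : ∀ x ∈ Set.Icc a b, g x = g₁ x - g₂ x)
    (hf_rc : ∀ x ∈ Set.Ico a b, Tendsto f (𝓝[≥] x) (𝓝 (f x)))
    (hf_ll : ∀ x ∈ Set.Ioc a b, Tendsto f (𝓝[<] x) (𝓝 (fl x))) :
    Tendsto
      (fun ε : ℝ => ∫ s : ℝ,
        (if s < a then g a else if s ≤ b then g s else 0) *
          ((if s < a then 0 else if s ≤ b then f s else f b) -
            (if s - ε < a then 0 else if s - ε ≤ b then f (s - ε) else f b)) / ε)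
      (𝓝[>] 0)
      (𝓝 (g b * fl b -
        ((∫ s in Set.Ioc a b, fl s ∂g₁.measure) -
          ∫ s in Set.Ioc a b, fl s ∂g₂.measure))) := by
  set F : ℝ → ℝ := fun s => if s < a then 0 else if s ≤ b then f s else f b with hFdef
  set G : ℝ → ℝ := fun s => if s < a then g a else if s ≤ b then g s else 0 with hGdef
  have hFlt : ∀ s, s < a → F s = 0 := fun s hs => by
    simp only [hFdef]; rw [if_pos hs]
  have hFmid : ∀ s, a ≤ s → s ≤ b → F s = f s := fun s h1 h2 => by
    simp only [hFdef]; rw [if_neg (not_lt.2 h1), if_pos h2]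
  have hFgt : ∀ s, b ≤ s → F s = f b := fun s hs => by
    rcases eq_or_lt_of_le hs with rfl | h
    · exact hFmid _ hab.le (le_refl _)
    · simp only [hFdef]; rw [if_neg (not_lt.2 (hab.le.trans hs)), if_neg (not_le.2 h)]
  have hGlt : ∀ s, s < a → G s = g a := fun s hs => by
    simp only [hGdef]; rw [if_pos hs]
  have hGmid : ∀ s, a ≤ s → s ≤ b → G s = g s := fun s h1 h2 => by
    simp only [hGdef]; rw [if_neg (not_lt.2 h1), if_pos h2]
  have hGgt : ∀ s, b < s → G s = 0 := fun s hs => by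
    simp only [hGdef]; rw [if_neg (not_lt.2 (hab.le.trans hs.le)), if_neg (not_le.2 hs)]
  -- right continuity of F everywhere
  have hFrc : ∀ x, Tendsto F (𝓝[≥] x) (𝓝 (F x)) := by
    intro x
    rcases lt_or_ge x a with hx | hx
    · rw [hFlt x hx]
      apply tendsto_const_nhds.congr'
      filter_upwards [nhdsWithin_le_nhds (Iio_mem_nhds hx)] with s hs
      exact (hFlt s hs).symm
    · rcases lt_or_ge x b with hxb | hxb
      · rw [hFmid x hx hxb.le]
        apply (hf_rc x ⟨hx, hxb⟩).congr'
        have hmem : Iio b ∩ Ici x ∈ 𝓝[≥] x :=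
          inter_mem (mem_nhdsWithin_of_mem_nhds (Iio_mem_nhds hxb)) self_mem_nhdsWithin
        filter_upwards [hmem] with s hs
        exact (hFmid s (hx.trans hs.2) (le_of_lt hs.1)).symm
      · rw [hFgt x hxb]
        apply tendsto_const_nhds.congr'
        filter_upwards [self_mem_nhdsWithin] with s (hs : x ≤ s)
        exact (hFgt s (hxb.trans hs)).symm
  have hFm : Measurable F := bw_meas_of_rc F hFrc
  obtain ⟨M₀, hM₀⟩ := bw_bdd a b f fl hf_rc hf_ll
  set M : ℝ := max M₀ 0 with hMdef
  have hM0 : 0 ≤ M := le_max_right _ _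
  have hFb : ∀ s, |F s| ≤ M := by
    intro s
    rcases lt_or_ge s a with h1 | h1
    · rw [hFlt s h1]; simpa using hM0
    · rcases le_or_gt s b with h2 | h2
      · rw [hFmid s h1 h2]
        exact (hM₀ s ⟨h1, h2⟩).trans (le_max_left _ _)
      · rw [hFgt s h2.le]
        exact (hM₀ b ⟨hab.le, le_refl b⟩).trans (le_max_left _ _)
  -- G is measurable and bounded
  have hGeq : G = fun s => if s < a then g₁ a - g₂ a else if s ≤ b then g₁ s - g₂ s else 0 := by
    funext s
    simp only [hGdef]
    split_ifs with h1 h2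
    · exact hg a ⟨le_refl a, hab.le⟩
    · exact hg s ⟨not_lt.1 h1, h2⟩
    · rfl
  have hGm : Measurable G := by
    rw [hGeq]
    exact Measurable.ite measurableSet_Iio measurable_const
      (Measurable.ite measurableSet_Iic (g₁.mono.measurable.sub g₂.mono.measurable)
        measurable_const)
  set Mg : ℝ := |g₁ a| + |g₂ a| + |g₁ b| + |g₂ b| with hMgdef
  have hGb : ∀ s, |G s| ≤ Mg := by
    intro s
    simp only [hGeq]
    split_ifs with h1 h2
    · rw [hMgdef]
      have := abs_nonneg (g₁ b); have := abs_nonneg (g₂ b)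
      have := abs_sub (g₁ a) (g₂ a)
      linarith
    · have ha1 : g₁ a ≤ g₁ s := g₁.mono (not_lt.1 h1)
      have hb1 : g₁ s ≤ g₁ b := g₁.mono h2
      have ha2 : g₂ a ≤ g₂ s := g₂.mono (not_lt.1 h1)
      have hb2 : g₂ s ≤ g₂ b := g₂.mono h2
      rw [hMgdef]
      apply abs_le.2
      constructor
      · have := neg_abs_le (g₁ a); have := le_abs_self (g₂ b)
        have := abs_nonneg (g₂ a); have := abs_nonneg (g₁ b)
        linarith
      · have := le_abs_self (g₁ b); have := neg_abs_le (g₂ a)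
        have := abs_nonneg (g₂ b); have := abs_nonneg (g₁ a)
        linarith
    · rw [hMgdef]
      have := abs_nonneg (g₁ a); have := abs_nonneg (g₂ a)
      have := abs_nonneg (g₁ b); have := abs_nonneg (g₂ b)
      simp only [abs_zero]
      linarith
  have hMg0 : 0 ≤ Mg := (abs_nonneg _).trans (hGb 0)
  -- integrability of F on bounded intervals
  have hFIcc : ∀ c d : ℝ, IntegrableOn F (Icc c d) := by
    intro c d
    refine Integrable.mono' (g := fun _ : ℝ => M)
      (integrableOn_const measure_Icc_lt_top.ne)
      hFm.aestronglyMeasurable.restrict ?_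
    exact ae_of_all _ fun s => by simpa using hFb s
  have hFIoo : ∀ c d : ℝ, IntegrableOn F (Ioo c d) :=
    fun c d => (hFIcc c d).mono_set Ioo_subset_Icc_self
  -- left limits of F
  have hFll : ∀ t ∈ Set.Ioc a b, Tendsto F (𝓝[<] t) (𝓝 (fl t)) := by
    intro t ht
    apply (hf_ll t ht).congr'
    filter_upwards [Ioo_mem_nhdsLT_of_mem (show t ∈ Ioc a t from ⟨ht.1, le_refl t⟩)] with s hs
    exact (hFmid s hs.1.le (hs.2.le.trans ht.2)).symm
  -- the restricted Stieltjes measures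
  set ν₁ : Measure ℝ := g₁.measure.restrict (Set.Ioc a b) with hν₁def
  set ν₂ : Measure ℝ := g₂.measure.restrict (Set.Ioc a b) with hν₂def
  haveI hfin1 : IsFiniteMeasure ν₁ := by
    constructor
    rw [hν₁def, Measure.restrict_apply_univ, g₁.measure_Ioc]
    exact ENNReal.ofReal_lt_top
  haveI hfin2 : IsFiniteMeasure ν₂ := by
    constructor
    rw [hν₂def, Measure.restrict_apply_univ, g₂.measure_Ioc]
    exact ENNReal.ofReal_lt_top
  have hν₁c : ν₁ (Set.Ioc a b)ᶜ = 0 := by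
    rw [hν₁def, Measure.restrict_apply measurableSet_Ioc.compl, compl_inter_self, measure_empty]
  have hν₂c : ν₂ (Set.Ioc a b)ᶜ = 0 := by
    rw [hν₂def, Measure.restrict_apply measurableSet_Ioc.compl, compl_inter_self, measure_empty]
  -- limits of the three pieces
  have hA : Tendsto (fun ε => (∫ s in Set.Ioo (b - ε) b, F s) / ε) (𝓝[>] (0:ℝ)) (𝓝 (fl b)) :=
    bw_avg F b (fl b) hFIoo (hFll b ⟨hab, le_refl b⟩)
  have hT : ∀ (ν : Measure ℝ), IsFiniteMeasure ν → ν (Set.Ioc a b)ᶜ = 0 →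
      (∀ᵐ t ∂ν, t ∈ Set.Ioc a b) →
      Tendsto (fun ε => (∫ t, (∫ s in Set.Ioo (t - ε) t, F s) ∂ν) / ε) (𝓝[>] (0:ℝ))
        (𝓝 (∫ t, fl t ∂ν)) := by
    intro ν hfin hνc hae
    have : ∀ ε : ℝ, (∫ t, (∫ s in Set.Ioo (t - ε) t, F s) ∂ν) / ε
        = ∫ t, ((∫ s in Set.Ioo (t - ε) t, F s) / ε) ∂ν := fun ε => (integral_div ε _).symm
    simp_rw [this]
    apply tendsto_integral_filter_of_dominated_convergence (bound := fun _ => M)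
    · filter_upwards [self_mem_nhdsWithin] with ε (hε : (0:ℝ) < ε)
      have := (bw_fubini a b F M hFm hFb ν hνc ε hε).2.aestronglyMeasurable.mul_const ε⁻¹
      simpa [div_eq_mul_inv] using this
    · filter_upwards [self_mem_nhdsWithin] with ε (hε : (0:ℝ) < ε)
      apply ae_of_all
      intro t
      have hvlt : volume (Ioo (t - ε) t) < ⊤ := measure_Ioo_lt_top
      have h1 := norm_setIntegral_le_of_norm_le_const (C := M) hvlt
        (fun s _ => by rw [Real.norm_eq_abs]; exact hFb s)
      rw [measureReal_def, Real.volume_Ioo, show t - (t - ε) = ε by ring, ENNReal.toReal_ofReal hε.le] at h1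
      rw [norm_div, Real.norm_eq_abs ε, abs_of_pos hε, div_le_iff₀ hε]
      exact h1
    · exact integrable_const M
    · filter_upwards [hae] with t ht
      exact bw_avg F t (fl t) hFIoo (hFll t ht)
  have hae1 : ∀ᵐ t ∂ν₁, t ∈ Set.Ioc a b := by
    rw [hν₁def]; exact ae_restrict_mem measurableSet_Ioc
  have hae2 : ∀ᵐ t ∂ν₂, t ∈ Set.Ioc a b := by
    rw [hν₂def]; exact ae_restrict_mem measurableSet_Ioc
  have hT1 := hT ν₁ hfin1 hν₁c hae1
  have hT2 := hT ν₂ hfin2 hν₂c hae2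
  -- the eventual identity
  have heq : ∀ᶠ ε in 𝓝[>] (0:ℝ),
      ((∫ t, (∫ s in Set.Ioo (t - ε) t, F s) ∂ν₂) / ε
        - (∫ t, (∫ s in Set.Ioo (t - ε) t, F s) ∂ν₁) / ε
        + g b * ((∫ s in Set.Ioo (b - ε) b, F s) / ε))
      = ∫ s : ℝ, G s * (F s - F (s - ε)) / ε := by
    filter_upwards [self_mem_nhdsWithin] with ε (hε : (0:ℝ) < ε)
    -- integrability facts
    have iGF : Integrable (fun s => G s * F s) := by
      apply bw_intble _ a b (Mg * M) (hGm.mul hFm)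
      · intro s
        show |G s * F s| ≤ Mg * M
        rw [abs_mul]
        exact mul_le_mul (hGb s) (hFb s) (abs_nonneg _) hMg0
      · intro s hs
        rw [mem_Icc, not_and_or, not_le, not_le] at hs
        show G s * F s = 0
        rcases hs with h | h
        · rw [hFlt s h, mul_zero]
        · rw [hGgt s h, zero_mul]
    have iGFε : Integrable (fun s => G s * F (s - ε)) := by
      apply bw_intble _ a b (Mg * M) (hGm.mul (hFm.comp (measurable_id.sub_const ε)))
      · intro s
        show |G s * F (s - ε)| ≤ Mg * M
        rw [abs_mul]
        exact mul_le_mul (hGb s) (hFb _) (abs_nonneg _) hMg0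
      · intro s hs
        rw [mem_Icc, not_and_or, not_le, not_le] at hs
        show G s * F (s - ε) = 0
        rcases hs with h | h
        · rw [hFlt (s - ε) (by linarith), mul_zero]
        · rw [hGgt s h, zero_mul]
    have iGεF : Integrable (fun s => G (s + ε) * F s) := by
      apply bw_intble _ a b (Mg * M) ((hGm.comp (measurable_id.add_const ε)).mul hFm)
      · intro s
        show |G (s + ε) * F s| ≤ Mg * M
        rw [abs_mul]
        exact mul_le_mul (hGb _) (hFb s) (abs_nonneg _) hMg0
      · intro s hs
        rw [mem_Icc, not_and_or, not_le, not_le] at hs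
        show G (s + ε) * F s = 0
        rcases hs with h | h
        · rw [hFlt s h, mul_zero]
        · rw [hGgt (s + ε) (by linarith), zero_mul]
    -- measurability / integrability of the measure-increment integrands
    have hclamp : ∀ (gS : StieltjesFunction ℝ),
        Measurable (fun s : ℝ => gS (a ⊔ ((s + ε) ⊓ b)) - gS (a ⊔ (s ⊓ b))) := by
      intro gS
      apply Measurable.sub
      · exact gS.mono.measurable.comp
          (continuous_const.sup (((continuous_id.add continuous_const).inf
            continuous_const))).measurable
      · exact gS.mono.measurable.comp
          (continuous_const.sup ((continuous_id.inf continuous_const))).measurable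
    have hJ : ∀ (gS : StieltjesFunction ℝ),
        Integrable (fun s => F s * ((gS.measure.restrict (Set.Ioc a b))
          (Set.Ioc s (s + ε))).toReal) := by
      intro gS
      have hrw : (fun s => F s * ((gS.measure.restrict (Set.Ioc a b))
          (Set.Ioc s (s + ε))).toReal)
          = fun s => F s * (gS (a ⊔ ((s + ε) ⊓ b)) - gS (a ⊔ (s ⊓ b))) := by
        funext s
        rw [bw_nu_Ioc gS a b s (s + ε) hab.le (by linarith)]
      rw [hrw]
      apply bw_intble _ a b (M * (gS b - gS a)) (hFm.mul (hclamp gS))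
      · intro s
        show |F s * (gS (a ⊔ ((s + ε) ⊓ b)) - gS (a ⊔ (s ⊓ b)))| ≤ M * (gS b - gS a)
        have hc1 : a ≤ a ⊔ (s ⊓ b) := le_sup_left
        have hc2 : a ⊔ (s ⊓ b) ≤ a ⊔ ((s + ε) ⊓ b) :=
          sup_le_sup_left (inf_le_inf_right b (by linarith)) a
        have hc3 : a ⊔ ((s + ε) ⊓ b) ≤ b := sup_le hab.le inf_le_right
        have hd1 : gS (a ⊔ (s ⊓ b)) ≤ gS (a ⊔ ((s + ε) ⊓ b)) := gS.mono hc2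
        have hd2 : gS a ≤ gS (a ⊔ (s ⊓ b)) := gS.mono hc1
        have hd3 : gS (a ⊔ ((s + ε) ⊓ b)) ≤ gS b := gS.mono hc3
        rw [abs_mul, abs_of_nonneg (by linarith : (0:ℝ) ≤ gS (a ⊔ ((s + ε) ⊓ b)) - gS (a ⊔ (s ⊓ b)))]
        exact mul_le_mul (hFb s) (by linarith) (by linarith) hM0
      · intro s hs
        rw [mem_Icc, not_and_or, not_le, not_le] at hs
        show F s * (gS (a ⊔ ((s + ε) ⊓ b)) - gS (a ⊔ (s ⊓ b))) = 0
        rcases hs with h | h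
        · rw [hFlt s h, zero_mul]
        · have h1 : a ⊔ (s ⊓ b) = b := by
            rw [inf_eq_right.2 (by linarith : b ≤ s), sup_eq_right.2 hab.le]
          have h2 : a ⊔ ((s + ε) ⊓ b) = b := by
            rw [inf_eq_right.2 (by linarith : b ≤ s + ε), sup_eq_right.2 hab.le]
          rw [h1, h2, sub_self, mul_zero]
    have iJ1 := hJ g₁
    have iJ2 := hJ g₂
    have iInd : Integrable (fun s => g b * (Set.Ioc (b - ε) b).indicator F s) :=
      (((hFIcc (b - ε) b).mono_set Ioc_subset_Icc_self).integrable_indicator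
        measurableSet_Ioc).const_mul (g b)
    -- pointwise identity
    have keyG : ∀ s : ℝ, F s * (G s - G (s + ε))
        = (F s * (ν₂ (Set.Ioc s (s + ε))).toReal - F s * (ν₁ (Set.Ioc s (s + ε))).toReal)
          + g b * (Set.Ioc (b - ε) b).indicator F s := by
      intro s
      have h2 := bw_nu_Ioc g₂ a b s (s + ε) hab.le (by linarith)
      have h1 := bw_nu_Ioc g₁ a b s (s + ε) hab.le (by linarith)
      rw [hν₁def, hν₂def, h1, h2]
      have hGrep : ∀ x : ℝ,
          G x = (g₁ (a ⊔ (x ⊓ b)) - g₂ (a ⊔ (x ⊓ b))) - (if b < x then g b else 0) := by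
        intro x
        rcases lt_or_ge x a with hx | hx
        · have hce : a ⊔ (x ⊓ b) = a := by
            rw [inf_eq_left.2 (by linarith : x ≤ b)]
            exact sup_eq_left.2 hx.le
          rw [hce, hGlt x hx, if_neg (by linarith : ¬ b < x), hg a ⟨le_refl a, hab.le⟩]
          ring
        · rcases le_or_gt x b with hxb | hxb
          · have hce : a ⊔ (x ⊓ b) = x := by rw [inf_eq_left.2 hxb, sup_eq_right.2 hx]
            rw [hce, hGmid x hx hxb, if_neg (not_lt.2 hxb), hg x ⟨hx, hxb⟩]
            ring
          · have hce : a ⊔ (x ⊓ b) = b := by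
              rw [inf_eq_right.2 hxb.le, sup_eq_right.2 hab.le]
            rw [hce, hGgt x hxb, if_pos hxb, hg b ⟨hab.le, le_refl b⟩]
            ring
      have hjump : (if b < s + ε then g b else 0) - (if b < s then g b else 0)
          = g b * (Set.Ioc (b - ε) b).indicator (fun _ => (1:ℝ)) s := by
        by_cases h3 : b < s
        · rw [if_pos (by linarith : b < s + ε), if_pos h3,
            indicator_of_notMem (show s ∉ Set.Ioc (b - ε) b from fun hmem => absurd hmem.2 (not_le.2 h3))]
          ring
        · by_cases h2' : b < s + ε
          · rw [if_pos h2', if_neg h3,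
              indicator_of_mem (mem_Ioc.2 ⟨by linarith, not_lt.1 h3⟩)]
            ring
          · rw [if_neg h2', if_neg h3,
              indicator_of_notMem (show s ∉ Set.Ioc (b - ε) b from fun hmem => absurd hmem.1 (by push_neg; linarith))]
            ring
      have hindF : g b * (Set.Ioc (b - ε) b).indicator F s
          = F s * (g b * (Set.Ioc (b - ε) b).indicator (fun _ => (1:ℝ)) s) := by
        by_cases hmem : s ∈ Set.Ioc (b - ε) b
        · rw [indicator_of_mem hmem, indicator_of_mem hmem]; ring
        · rw [indicator_of_notMem hmem, indicator_of_notMem hmem]; ring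
      rw [hGrep s, hGrep (s + ε), hindF]
      linear_combination (F s) * hjump
    -- shift of variable
    have hshift : ∫ s, G s * F (s - ε) = ∫ s, G (s + ε) * F s := by
      have h := integral_add_right_eq_self (μ := volume) (fun u => G u * F (u - ε)) ε
      simp only [add_sub_cancel_right] at h
      exact h.symm
    have e3 : (∫ s, (F s * (G s - G (s + ε))))
        = (∫ s, G s * F s) - ∫ s, G (s + ε) * F s := by
      rw [← integral_sub iGF iGεF]
      congr 1
      funext s
      ring
    have e4 : (∫ s, (F s * (G s - G (s + ε))))
        = ((∫ s, F s * (ν₂ (Set.Ioc s (s + ε))).toReal)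
            - ∫ s, F s * (ν₁ (Set.Ioc s (s + ε))).toReal)
          + g b * ∫ s in Set.Ioo (b - ε) b, F s := by
      calc (∫ s, (F s * (G s - G (s + ε))))
          = ∫ s, ((F s * (ν₂ (Set.Ioc s (s + ε))).toReal
              - F s * (ν₁ (Set.Ioc s (s + ε))).toReal)
              + g b * (Set.Ioc (b - ε) b).indicator F s) := by
            congr 1; funext s; exact keyG s
        _ = ((∫ s, F s * (ν₂ (Set.Ioc s (s + ε))).toReal)
              - ∫ s, F s * (ν₁ (Set.Ioc s (s + ε))).toReal)
            + ∫ s, g b * (Set.Ioc (b - ε) b).indicator F s := by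
            have iJsub : Integrable (fun s => F s * (ν₂ (Set.Ioc s (s + ε))).toReal
                - F s * (ν₁ (Set.Ioc s (s + ε))).toReal) := iJ2.sub iJ1
            rw [integral_add iJsub iInd, integral_sub iJ2 iJ1]
        _ = ((∫ s, F s * (ν₂ (Set.Ioc s (s + ε))).toReal)
              - ∫ s, F s * (ν₁ (Set.Ioc s (s + ε))).toReal)
            + g b * ∫ s in Set.Ioo (b - ε) b, F s := by
            rw [integral_const_mul, integral_indicator measurableSet_Ioc,
              integral_Ioc_eq_integral_Ioo]
    have e5 : (∫ s, F s * (ν₂ (Set.Ioc s (s + ε))).toReal)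
        = ∫ t, (∫ s in Set.Ioo (t - ε) t, F s) ∂ν₂ :=
      (bw_fubini a b F M hFm hFb ν₂ hν₂c ε hε).1
    have e6 : (∫ s, F s * (ν₁ (Set.Ioc s (s + ε))).toReal)
        = ∫ t, (∫ s in Set.Ioo (t - ε) t, F s) ∂ν₁ :=
      (bw_fubini a b F M hFm hFb ν₁ hν₁c ε hε).1
    symm
    calc ∫ s : ℝ, G s * (F s - F (s - ε)) / ε
        = (∫ s, G s * (F s - F (s - ε))) / ε := integral_div ε _
      _ = ((∫ s, G s * F s) - ∫ s, G s * F (s - ε)) / ε := by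
          simp_rw [mul_sub]
          rw [integral_sub iGF iGFε]
      _ = ((∫ s, G s * F s) - ∫ s, G (s + ε) * F s) / ε := by rw [hshift]
      _ = (∫ s, (F s * (G s - G (s + ε)))) / ε := by rw [e3]
      _ = (((∫ t, (∫ s in Set.Ioo (t - ε) t, F s) ∂ν₂)
            - ∫ t, (∫ s in Set.Ioo (t - ε) t, F s) ∂ν₁)
          + g b * ∫ s in Set.Ioo (b - ε) b, F s) / ε := by rw [e4, e5, e6]
      _ = (∫ t, (∫ s in Set.Ioo (t - ε) t, F s) ∂ν₂) / ε
          - (∫ t, (∫ s in Set.Ioo (t - ε) t, F s) ∂ν₁) / ε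
          + g b * ((∫ s in Set.Ioo (b - ε) b, F s) / ε) := by
          rw [add_div, sub_div, mul_div_assoc]
  -- final assembly
  have hfinal := Tendsto.congr' heq ((hT2.sub hT1).add (hA.const_mul (g b)))
  have hpt : g b * fl b - ((∫ t, fl t ∂ν₁) - (∫ t, fl t ∂ν₂))
      = ((∫ t, fl t ∂ν₂) - (∫ t, fl t ∂ν₁)) + g b * fl b := by ring
  rw [show (∫ s in Set.Ioc a b, fl s ∂g₁.measure) = ∫ t, fl t ∂ν₁ from rfl,
    show (∫ s in Set.Ioc a b, fl s ∂g₂.measure) = ∫ t, fl t ∂ν₂ from rfl, hpt]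
  exact hfinal
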